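/- The dispersion-component (σ-component) of the score function of the generalized Heckman model has conditional mean zero given selection: ∫_{-∞}^{∞} [ z(y)² − 1 − (ρ/√(1 − ρ²)) z(y) φ(ζ(y))/Φ(ζ(y)) ] · (1/(σ Φ(μ₂))) φ(z(y)) Φ(ζ(y)) dy = 0. -/

import Mathlib

open MeasureTheory Set Filter

/-- Standard normal density. -/
noncomputable def phi (t : ℝ) : ℝ := Real.exp (-(t ^ 2) / 2) / Real.sqrt (2 * Real.pi)

/-- Standard normal cumulative distribution function. -/
noncomputable def Phi (x : ℝ) : ℝ := ∫ t in Set.Iic x, phi t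

lemma phi_pos (t : ℝ) : 0 < phi t :=
  div_pos (Real.exp_pos _) (Real.sqrt_pos.2 (by positivity))

lemma phi_cont : Continuous phi := by
  unfold phi; fun_prop

lemma phi_neg (t : ℝ) : phi (-t) = phi t := by simp [phi]

lemma hasDerivAt_phi (t : ℝ) : HasDerivAt phi (-t * phi t) t := by
  have h1 : HasDerivAt (fun u : ℝ => -(u ^ 2) / 2) (-t) t := by
    have := ((hasDerivAt_pow 2 t).neg).div_const 2
    refine this.congr_deriv ?_
    norm_num
    ring
  have h2 := (h1.exp).div_const (Real.sqrt (2 * Real.pi))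
  refine h2.congr_deriv ?_
  unfold phi; ring

lemma phi_integrable : Integrable phi := by
  have h : Integrable fun t : ℝ => Real.exp (-(1/2 : ℝ) * t ^ 2) :=
    integrable_exp_neg_mul_sq (by norm_num)
  have h2 := h.div_const (Real.sqrt (2 * Real.pi))
  convert h2 using 2 with t
  unfold phi
  congr 2
  ring

lemma Phi_nonneg (x : ℝ) : 0 ≤ Phi x :=
  setIntegral_nonneg measurableSet_Iic fun t _ => (phi_pos t).le

lemma integral_phi : ∫ t : ℝ, phi t = 1 := by
  have h : ∫ t : ℝ, Real.exp (-(1/2 : ℝ) * t ^ 2) = Real.sqrt (2 * Real.pi) := by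
    rw [integral_gaussian]
    congr 1
    rw [div_div_eq_mul_div, mul_comm]
    norm_num
  have h2 : ∫ t : ℝ, phi t = (∫ t : ℝ, Real.exp (-(1/2 : ℝ) * t ^ 2)) / Real.sqrt (2 * Real.pi) := by
    rw [← integral_div]
    congr 1 with t
    unfold phi
    congr 2
    ring
  rw [h2, h, div_self (by positivity)]

lemma Phi_le_one (x : ℝ) : Phi x ≤ 1 := by
  rw [← integral_phi]
  exact setIntegral_le_integral phi_integrable
    (Filter.Eventually.of_forall fun t => (phi_pos t).le)

lemma Phi_pos (x : ℝ) : 0 < Phi x := by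
  rw [Phi, setIntegral_pos_iff_support_of_nonneg_ae
    (Filter.Eventually.of_forall fun t => (phi_pos t).le) phi_integrable.integrableOn]
  have : Function.support phi = Set.univ := by
    ext t; simp [Function.support, (phi_pos t).ne']
  rw [this, Set.univ_inter]
  simp [Real.volume_Iic]

lemma Phi_hasDerivAt (x : ℝ) : HasDerivAt Phi (phi x) x := by
  have key : ∀ y : ℝ, Phi y = Phi x + ∫ t in x..y, phi t := by
    intro y
    rw [← intervalIntegral.integral_Iic_sub_Iic phi_integrable.integrableOn
      phi_integrable.integrableOn]
    unfold Phi
    ring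
  have h : HasDerivAt (fun y => Phi x + ∫ t in x..y, phi t) (phi x) x := by
    refine HasDerivAt.const_add _ ?_
    exact intervalIntegral.integral_hasDerivAt_right
      phi_integrable.intervalIntegrable
      phi_cont.stronglyMeasurable.stronglyMeasurableAtFilter
      phi_cont.continuousAt
  exact h.congr_of_eventuallyEq (Filter.Eventually.of_forall key)

lemma Phi_cont : Continuous Phi :=
  continuous_iff_continuousAt.2 fun x => (Phi_hasDerivAt x).continuousAt

lemma phi_le_exp (t : ℝ) : phi t ≤ Real.exp (-(t ^ 2) / 2) := by
  rw [phi, div_le_iff₀ (by positivity)]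
  nlinarith [Real.one_le_sqrt.2 (by nlinarith [Real.pi_gt_three] : (1:ℝ) ≤ 2 * Real.pi),
    Real.exp_pos (-(t ^ 2)/2)]

lemma tendsto_abs_mul_phi_atTop : Tendsto (fun t => |t| * phi t) atTop (nhds 0) := by
  have hg : Tendsto (fun t : ℝ => 2 / t) atTop (nhds 0) :=
    Tendsto.div_atTop tendsto_const_nhds tendsto_id
  refine squeeze_zero_norm' ?_ hg
  filter_upwards [eventually_ge_atTop (1:ℝ)] with t ht
  have ht0 : (0:ℝ) < t := by linarith
  have hexp : Real.exp (-(t ^ 2) / 2) ≤ 2 / t ^ 2 := by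
    have h1 : t ^ 2 / 2 ≤ Real.exp (t ^ 2 / 2) := by
      nlinarith [Real.add_one_le_exp (t ^ 2 / 2)]
    rw [neg_div, Real.exp_neg, inv_le_comm₀ (Real.exp_pos _) (by positivity)]
    calc (2 / t ^ 2)⁻¹ = t ^ 2 / 2 := by rw [inv_div]
    _ ≤ _ := h1
  have hb : |t| * phi t ≤ 2 / t := by
    rw [abs_of_pos ht0]
    calc t * phi t ≤ t * (2 / t ^ 2) :=
          mul_le_mul_of_nonneg_left ((phi_le_exp t).trans hexp) ht0.le
    _ = 2 / t := by field_simp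
  rw [Real.norm_eq_abs, abs_of_nonneg (mul_nonneg (abs_nonneg t) (phi_pos t).le)]
  exact hb

lemma tendsto_abs_mul_phi_atBot : Tendsto (fun t => |t| * phi t) atBot (nhds 0) := by
  have := tendsto_abs_mul_phi_atTop.comp tendsto_neg_atBot_atTop
  refine this.congr fun t => ?_
  simp [Function.comp, phi_neg]

lemma integrable_sq_add_one_mul_phi : Integrable fun t : ℝ => (t ^ 2 + 1) * phi t := by
  have h1 : Integrable fun t : ℝ => t ^ 2 * phi t := by
    have h : Integrable fun t : ℝ => t ^ ((2:ℕ):ℝ) * Real.exp (-(1/2 : ℝ) * t ^ 2) :=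
      integrable_rpow_mul_exp_neg_mul_sq (by norm_num) (by norm_num)
    have h2 := h.div_const (Real.sqrt (2 * Real.pi))
    refine h2.congr ?_
    filter_upwards with t
    rw [Real.rpow_natCast]
    unfold phi
    rw [mul_div_assoc]
    congr 2
    ring
  have h2 : Integrable fun t : ℝ => 1 * phi t := by simpa using phi_integrable
  simpa [add_mul, Pi.add_def] using h1.add h2

lemma GH_algebra_id (a c pz pW PW Pμ σ : ℝ) (hPW : PW ≠ 0) :
    (a ^ 2 - 1 - c * a * (pW / PW)) * (1 / (σ * Pμ) * pz * PW)
      = Pμ⁻¹ * (σ⁻¹ * ((a ^ 2 - 1) * pz * PW - c * (a * pz * pW))) := by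
  have hPW1 : PW * PW⁻¹ = 1 := mul_inv_cancel₀ hPW
  linear_combination (-(c * a * pW * pz * σ⁻¹ * Pμ⁻¹)) * hPW1

theorem GH_sigma_score_conditional_mean_zero (μ₁ μ₂ σ ρ : ℝ) (hσ : 0 < σ) (hρ₁ : -1 < ρ) (hρ₂ : ρ < 1)
    (z ζ : ℝ → ℝ)
    (hz : ∀ y, z y = (y - μ₁) / σ)
    (hζ : ∀ y, ζ y = (μ₂ + ρ * z y) / Real.sqrt (1 - ρ ^ 2)) :
    (∫ y : ℝ, (z y ^ 2 - 1 - (ρ / Real.sqrt (1 - ρ ^ 2)) * z y * (phi (ζ y) / Phi (ζ y)))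
        * ((1 / (σ * Phi μ₂)) * phi (z y) * Phi (ζ y))) = 0 := by
  set s : ℝ := Real.sqrt (1 - ρ ^ 2) with hs
  have hs0 : 0 < s := Real.sqrt_pos.2 (by nlinarith)
  set F : ℝ → ℝ := fun y => -(z y) * phi (z y) * Phi (ζ y) with hF
  set F' : ℝ → ℝ := fun y =>
    σ⁻¹ * ((z y ^ 2 - 1) * phi (z y) * Phi (ζ y) - (ρ / s) * (z y * phi (z y) * phi (ζ y)))
    with hF'
  have hZd : ∀ y : ℝ, HasDerivAt z σ⁻¹ y := by
    intro y
    have : HasDerivAt (fun y : ℝ => (y - μ₁) / σ) σ⁻¹ y := by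
      simpa [div_eq_mul_inv] using (((hasDerivAt_id y).sub_const μ₁).div_const σ)
    exact this.congr_of_eventuallyEq (Filter.Eventually.of_forall hz)
  have hWd : ∀ y : ℝ, HasDerivAt ζ (ρ * σ⁻¹ / s) y := by
    intro y
    have : HasDerivAt (fun y => (μ₂ + ρ * z y) / s) (ρ * σ⁻¹ / s) y :=
      (((hZd y).const_mul ρ).const_add μ₂).div_const s
    exact this.congr_of_eventuallyEq (Filter.Eventually.of_forall hζ)
  have hFd : ∀ y : ℝ, HasDerivAt F (F' y) y := by
    intro y
    have h1 : HasDerivAt (fun y => phi (z y)) (-(z y) * phi (z y) * σ⁻¹) y :=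
      (hasDerivAt_phi (z y)).comp y (hZd y)
    have h2 : HasDerivAt (fun y => Phi (ζ y)) (phi (ζ y) * (ρ * σ⁻¹ / s)) y :=
      (Phi_hasDerivAt (ζ y)).comp y (hWd y)
    have h3 : HasDerivAt (fun y => -(z y) * phi (z y))
        (-σ⁻¹ * phi (z y) + -(z y) * (-(z y) * phi (z y) * σ⁻¹)) y :=
      ((hZd y).neg).mul h1
    have h4 := h3.mul h2
    refine h4.congr_deriv ?_
    simp only [hF']
    field_simp
    ring
  -- continuity
  have hzc : Continuous z := by
    have : Continuous fun y : ℝ => (y - μ₁) / σ := by fun_prop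
    exact this.congr fun y => (hz y).symm
  have hWc : Continuous ζ := by
    have : Continuous fun y => (μ₂ + ρ * z y) / s := by fun_prop
    exact this.congr fun y => (hζ y).symm
  have hpzc : Continuous fun y => phi (z y) := phi_cont.comp hzc
  have hpWc : Continuous fun y => phi (ζ y) := phi_cont.comp hWc
  have hPWc : Continuous fun y => Phi (ζ y) := Phi_cont.comp hWc
  have hF'c : Continuous F' := by
    rw [hF']
    exact continuous_const.mul
      (((((hzc.pow 2).sub continuous_const).mul hpzc).mul hPWc).sub
        (continuous_const.mul ((hzc.mul hpzc).mul hpWc)))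
  -- integrability of F'
  have hdom : Integrable fun y : ℝ => (z y ^ 2 + 1) * phi (z y) := by
    have h0 : Integrable fun t : ℝ => (t ^ 2 + 1) * phi t := integrable_sq_add_one_mul_phi
    have h1 : Integrable fun u : ℝ => ((u / σ) ^ 2 + 1) * phi (u / σ) :=
      h0.comp_div hσ.ne'
    have h2 : Integrable fun y : ℝ => (((y - μ₁) / σ) ^ 2 + 1) * phi ((y - μ₁) / σ) :=
      h1.comp_sub_right μ₁
    exact h2.congr (Filter.Eventually.of_forall fun y => by simp only [hz])
  have hK : ∀ t : ℝ, phi t ≤ (Real.sqrt (2 * Real.pi))⁻¹ := by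
    intro t
    rw [phi, div_le_iff₀ (by positivity), inv_mul_cancel₀ (by positivity)]
    simpa using Real.exp_le_one_iff.2 (by nlinarith [sq_nonneg t] : -(t^2)/2 ≤ 0)
  set C : ℝ := σ⁻¹ * (1 + |ρ / s| * (Real.sqrt (2 * Real.pi))⁻¹) with hC
  have hF'int : Integrable F' := by
    refine Integrable.mono' ((hdom.const_mul C)) hF'c.aestronglyMeasurable ?_
    filter_upwards with y
    have hp1 : 0 < phi (z y) := phi_pos _
    have hp2 : 0 < phi (ζ y) := phi_pos _
    have hP1 : 0 ≤ Phi (ζ y) := Phi_nonneg _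
    have hP2 : Phi (ζ y) ≤ 1 := Phi_le_one _
    rw [Real.norm_eq_abs, hF']
    have habs : |z y ^ 2 - 1| ≤ z y ^ 2 + 1 := by
      rw [abs_le]; constructor <;> nlinarith [sq_nonneg (z y)]
    have hzabs : |z y| ≤ z y ^ 2 + 1 := by
      rw [abs_le]
      constructor <;> nlinarith [sq_nonneg (z y + 1), sq_nonneg (z y - 1)]
    have b1 : |(z y ^ 2 - 1) * phi (z y) * Phi (ζ y)| ≤ (z y ^ 2 + 1) * phi (z y) := by
      rw [abs_mul, abs_mul, abs_of_nonneg hp1.le, abs_of_nonneg hP1]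
      calc |z y ^ 2 - 1| * phi (z y) * Phi (ζ y) ≤ |z y ^ 2 - 1| * phi (z y) * 1 :=
            mul_le_mul_of_nonneg_left hP2 (mul_nonneg (abs_nonneg _) hp1.le)
        _ ≤ (z y ^ 2 + 1) * phi (z y) := by
            rw [mul_one]; exact mul_le_mul_of_nonneg_right habs hp1.le
    have b2 : |ρ / s * (z y * phi (z y) * phi (ζ y))|
        ≤ |ρ / s| * ((z y ^ 2 + 1) * phi (z y) * (Real.sqrt (2 * Real.pi))⁻¹) := by
      rw [abs_mul]
      refine mul_le_mul_of_nonneg_left ?_ (abs_nonneg _)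
      rw [abs_mul, abs_mul, abs_of_nonneg hp1.le, abs_of_nonneg hp2.le]
      exact mul_le_mul (mul_le_mul_of_nonneg_right hzabs hp1.le) (hK _) hp2.le
        (mul_nonneg (by positivity) hp1.le)
    calc |σ⁻¹ * ((z y ^ 2 - 1) * phi (z y) * Phi (ζ y) - ρ / s * (z y * phi (z y) * phi (ζ y)))|
        ≤ σ⁻¹ * (|(z y ^ 2 - 1) * phi (z y) * Phi (ζ y)|
            + |ρ / s * (z y * phi (z y) * phi (ζ y))|) := by
          rw [abs_mul, abs_of_nonneg (by positivity : (0:ℝ) ≤ σ⁻¹)]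
          exact mul_le_mul_of_nonneg_left (abs_sub _ _) (by positivity)
      _ ≤ σ⁻¹ * ((z y ^ 2 + 1) * phi (z y)
            + |ρ / s| * ((z y ^ 2 + 1) * phi (z y) * (Real.sqrt (2 * Real.pi))⁻¹)) :=
          mul_le_mul_of_nonneg_left (add_le_add b1 b2) (by positivity)
      _ = C * ((z y ^ 2 + 1) * phi (z y)) := by rw [hC]; ring
  -- limits of F at ±∞
  have hbound : ∀ y : ℝ, ‖F y‖ ≤ |z y| * phi (z y) := by
    intro y
    rw [hF, Real.norm_eq_abs, abs_mul, abs_mul, abs_neg,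
      abs_of_nonneg (phi_pos (z y)).le, abs_of_nonneg (Phi_nonneg (ζ y))]
    nlinarith [mul_nonneg (abs_nonneg (z y)) (phi_pos (z y)).le, Phi_le_one (ζ y),
      Phi_nonneg (ζ y)]
  have hzTop : Tendsto z atTop atTop := by
    have h1 : Tendsto (fun y : ℝ => (y - μ₁) / σ) atTop atTop :=
      (tendsto_atTop_add_const_right atTop (-μ₁) tendsto_id).atTop_div_const hσ
      |>.congr fun y => by simp only [id_eq]; ring
    exact h1.congr fun y => (hz y).symm
  have hzBot : Tendsto z atBot atBot := by
    have h1 : Tendsto (fun y : ℝ => (y - μ₁) / σ) atBot atBot :=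
      (tendsto_atBot_add_const_right atBot (-μ₁) tendsto_id).atBot_div_const hσ
      |>.congr fun y => by simp only [id_eq]; ring
    exact h1.congr fun y => (hz y).symm
  have hFtop : Tendsto F atTop (nhds 0) :=
    squeeze_zero_norm hbound (tendsto_abs_mul_phi_atTop.comp hzTop)
  have hFbot : Tendsto F atBot (nhds 0) :=
    squeeze_zero_norm hbound (tendsto_abs_mul_phi_atBot.comp hzBot)
  -- FTC on both half-lines
  have hIic : ∫ y in Iic (0:ℝ), F' y = F 0 - 0 :=
    integral_Iic_of_hasDerivAt_of_tendsto (hFd 0).continuousAt.continuousWithinAt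
      (fun x _ => hFd x) hF'int.integrableOn hFbot
  have hIoi : ∫ y in Ioi (0:ℝ), F' y = 0 - F 0 :=
    integral_Ioi_of_hasDerivAt_of_tendsto (hFd 0).continuousAt.continuousWithinAt
      (fun x _ => hFd x) hF'int.integrableOn hFtop
  have hint : ∫ y : ℝ, F' y = 0 := by
    rw [← intervalIntegral.integral_Iic_add_Ioi hF'int.integrableOn hF'int.integrableOn,
      hIic, hIoi]
    ring
  have hcongr : ∀ y : ℝ,
      (z y ^ 2 - 1 - (ρ / s) * z y * (phi (ζ y) / Phi (ζ y)))
        * ((1 / (σ * Phi μ₂)) * phi (z y) * Phi (ζ y)) = (Phi μ₂)⁻¹ * F' y := by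
    intro y
    rw [hF']
    exact GH_algebra_id (z y) (ρ / s) (phi (z y)) (phi (ζ y)) (Phi (ζ y)) (Phi μ₂) σ
      (Phi_pos (ζ y)).ne'
  calc (∫ y : ℝ, (z y ^ 2 - 1 - (ρ / s) * z y * (phi (ζ y) / Phi (ζ y)))
        * ((1 / (σ * Phi μ₂)) * phi (z y) * Phi (ζ y)))
      = ∫ y : ℝ, (Phi μ₂)⁻¹ * F' y :=
        integral_congr_ae (Filter.Eventually.of_forall hcongr)
    _ = (Phi μ₂)⁻¹ * ∫ y : ℝ, F' y := integral_const_mul _ _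
    _ = 0 := by rw [hint, mul_zero]
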